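/- The tensor rank of the single W state |W⟩ = |001⟩ + |010⟩ + |100⟩ is exactly 3. -/

import Mathlib

/-- Tensor rank of a tripartite tensor: minimum number of elementary tensors summing to it. -/
noncomputable def trank {ιA ιB ιC : Type*} (φ : ιA → ιB → ιC → ℂ) : ℕ :=
  sInf {r : ℕ | ∃ (a : Fin r → ιA → ℂ) (b : Fin r → ιB → ℂ) (c : Fin r → ιC → ℂ),
    ∀ i j k, φ i j k = ∑ l, a l i * b l j * c l k}

/-- The (unnormalized) W state |001⟩ + |010⟩ + |100⟩. -/
def Wstate : Fin 2 → Fin 2 → Fin 2 → ℂ :=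
  fun i j k => if (i : ℕ) + (j : ℕ) + (k : ℕ) = 1 then 1 else 0

/-- The tensor rank of the W state is exactly 3. -/
theorem trank_W : trank Wstate = 3 := by
  have h3 : 3 ∈ {r : ℕ | ∃ (a : Fin r → Fin 2 → ℂ) (b : Fin r → Fin 2 → ℂ)
      (c : Fin r → Fin 2 → ℂ), ∀ i j k, Wstate i j k = ∑ l, a l i * b l j * c l k} := by
    refine ⟨![![1,0],![1,0],![0,1]], ![![1,0],![0,1],![1,0]], ![![0,1],![1,0],![1,0]], ?_⟩
    intro i j k
    fin_cases i <;> fin_cases j <;> fin_cases k <;>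
      norm_num [Wstate, Fin.sum_univ_three, Matrix.vecHead, Matrix.vecTail, Matrix.cons_val_two]
  unfold trank
  refine le_antisymm (Nat.sInf_le h3) (le_csInf ⟨3, h3⟩ ?_)
  rintro r ⟨a, b, c, h⟩
  by_contra hlt
  push_neg at hlt
  interval_cases r
  · have h001 := h 0 0 1
    simp [Wstate] at h001
  · have h000 := h 0 0 0
    have h001 := h 0 0 1
    have h010 := h 0 1 0
    have h011 := h 0 1 1
    simp only [Fin.sum_univ_one] at h000 h001 h010 h011
    rw [show Wstate 0 0 0 = 0 by norm_num [Wstate]] at h000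
    rw [show Wstate 0 0 1 = 1 by norm_num [Wstate]] at h001
    rw [show Wstate 0 1 0 = 1 by norm_num [Wstate]] at h010
    rw [show Wstate 0 1 1 = 0 by norm_num [Wstate]] at h011
    have key : a 0 0 * b 0 0 * c 0 1 * (a 0 0 * b 0 1 * c 0 0)
        = a 0 0 * b 0 0 * c 0 0 * (a 0 0 * b 0 1 * c 0 1) := by ring
    rw [← h001, ← h010, ← h000, ← h011] at key
    norm_num at key
  · have h000 := h 0 0 0
    have h001 := h 0 0 1
    have h010 := h 0 1 0
    have h011 := h 0 1 1
    have h100 := h 1 0 0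
    have h101 := h 1 0 1
    have h110 := h 1 1 0
    have h111 := h 1 1 1
    simp only [Fin.sum_univ_two] at h000 h001 h010 h011 h100 h101 h110 h111
    rw [show Wstate 0 0 0 = 0 by norm_num [Wstate]] at h000
    rw [show Wstate 0 0 1 = 1 by norm_num [Wstate]] at h001
    rw [show Wstate 0 1 0 = 1 by norm_num [Wstate]] at h010
    rw [show Wstate 0 1 1 = 0 by norm_num [Wstate]] at h011
    rw [show Wstate 1 0 0 = 1 by norm_num [Wstate]] at h100
    rw [show Wstate 1 0 1 = 0 by norm_num [Wstate]] at h101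
    rw [show Wstate 1 1 0 = 0 by norm_num [Wstate]] at h110
    rw [show Wstate 1 1 1 = 0 by norm_num [Wstate]] at h111
    set p0 := a 0 0; set q0 := a 0 1; set p1 := a 1 0; set q1 := a 1 1
    set r0 := b 0 0; set s0 := b 0 1; set r1 := b 1 0; set s1 := b 1 1
    set t0 := c 0 0; set u0 := c 0 1; set t1 := c 1 0; set u1 := c 1 1
    set D : ℂ := (p0 * q1 - q0 * p1) * (r0 * s1 - s0 * r1) with hDdef
    have key3 : t0 * t1 * D = -1 := by
      linear_combination (-(t0*q0*s0 + t1*q1*s1)) * h000 + (t0*q0*r0 + t1*q1*r1) * h010 + h100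
    have key1 : u0 * u1 * D = 0 := by
      linear_combination (-(u0*p0*r0 + u1*p1*r1)) * h111 + (u0*q0*r0 + u1*q1*r1) * h011
    have key2 : (t0 * u1 + t1 * u0) * D = 0 := by
      linear_combination (-(t0*p0*r0 + t1*p1*r1)) * h111 - (u0*p0*r0 + u1*p1*r1) * h110 +
        (t0*p0*s0 + t1*p1*s1) * h101 + (t0*q0*r0 + t1*q1*r1) * h011
    have hD : D ≠ 0 := by
      intro hD0
      rw [hD0, mul_zero] at key3
      norm_num at key3
    have ht0 : t0 ≠ 0 := by
      intro h0; rw [h0] at key3; norm_num at key3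
    have ht1 : t1 ≠ 0 := by
      intro h0; rw [h0] at key3; norm_num at key3
    have hu01 : u0 * u1 = 0 := by
      have := mul_eq_zero.mp key1
      tauto
    have hu0 : u0 = 0 ∧ u1 = 0 := by
      rcases mul_eq_zero.mp hu01 with h0 | h1
      · have : t0 * u1 = 0 := by
          have h2 : (t0 * u1 + t1 * u0) = 0 := by
            rcases mul_eq_zero.mp key2 with hx | hx
            · exact hx
            · exact absurd hx hD
          rw [h0] at h2; linear_combination h2
        exact ⟨h0, by
          rcases mul_eq_zero.mp this with hx | hx
          · exact absurd hx ht0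
          · exact hx⟩
      · have h2 : (t0 * u1 + t1 * u0) = 0 := by
          rcases mul_eq_zero.mp key2 with hx | hx
          · exact hx
          · exact absurd hx hD
        have : t1 * u0 = 0 := by rw [h1] at h2; linear_combination h2
        refine ⟨?_, h1⟩
        rcases mul_eq_zero.mp this with hx | hx
        · exact absurd hx ht1
        · exact hx
    rw [hu0.1, hu0.2] at h001
    norm_num at h001
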